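/- Let r : ℂ → ℝ be a C¹ function satisfying r(ξ) + r(−1/conj ξ) = w for all ξ ≠ 0 (constant width w), and let F = (1/2)(1+|ξ|²)²·∂r/∂ξ̄. Then for all ξ ≠ 0, F(−1/conj ξ) = −(1/conj(ξ)²)·conj(F(ξ)). -/

import Mathlib

open Complex MeasureTheory ComplexConjugate

noncomputable section

/-- Wirtinger derivative ∂/∂ξ of a complex-valued function. -/
def wd (f : ℂ → ℂ) (ξ : ℂ) : ℂ :=
  (1 / 2) * (fderiv ℝ f ξ 1 - Complex.I * fderiv ℝ f ξ Complex.I)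

/-- Wirtinger derivative ∂/∂ξ̄ of a real-valued function, as a complex number. -/
def wdbarR (r : ℂ → ℝ) (ξ : ℂ) : ℂ :=
  (1 / 2) * ((fderiv ℝ r ξ 1 : ℝ) + Complex.I * (fderiv ℝ r ξ Complex.I : ℝ))

/-- F = (1/2)(1+|ξ|²)² ∂r/∂ξ̄. -/
def Fcong (r : ℂ → ℝ) (ξ : ℂ) : ℂ :=
  (1 / 2) * ((1 + Complex.normSq ξ) ^ 2 : ℝ) * wdbarR r ξ

/-- ψ = (1+|ξ|²)² ∂/∂ξ [F/(1+|ξ|²)²] (real-valued). -/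
def psiSlope (r : ℂ → ℝ) (ξ : ℂ) : ℝ :=
  (((1 + Complex.normSq ξ) ^ 2 : ℝ) *
    wd (fun z => Fcong r z / (((1 + Complex.normSq z) ^ 2 : ℝ) : ℂ)) ξ).re

/-- σ = −∂(conj F)/∂ξ. -/
def sigmaSlope (r : ℂ → ℝ) (ξ : ℂ) : ℂ :=
  - wd (fun z => conj (Fcong r z)) ξ

/-- The round sphere area measure in the stereographic coordinate. -/
def muSphere : Measure ℂ :=
  volume.withDensity fun ξ => ENNReal.ofReal (4 / (1 + Complex.normSq ξ) ^ 2)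

/-- Constant width w: r(ξ) + r(−1/conj ξ) = w for all ξ ≠ 0. -/
def ConstWidth (r : ℂ → ℝ) (w : ℝ) : Prop :=
  ∀ ξ : ℂ, ξ ≠ 0 → r ξ + r (-1 / conj ξ) = w

/-- Proposition 3 of the paper: the normal congruence of a surface of
constant width has the reflection symmetry `F(τ(ξ)) = −conj(F(ξ))/conj(ξ)²`. -/
theorem constant_width_congruence_reflection_symmetry
    (r : ℂ → ℝ) (w : ℝ) (hr : ContDiff ℝ 1 r) (hcw : ConstWidth r w) :
    ∀ ξ : ℂ, ξ ≠ 0 →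
      Fcong r (-1 / conj ξ) = -(1 / (conj ξ) ^ 2) * conj (Fcong r ξ) := by

  intro ξ hξ
  have hc : (conj ξ : ℂ) ≠ 0 := by simpa using hξ
  have hdr := hr.differentiable one_ne_zero
  set τ : ℂ → ℂ := fun z => -1 / conj z with hτdef
  -- derivative of τ at ξ
  have h2 : HasFDerivAt (fun z : ℂ => z⁻¹)
      ((ContinuousLinearMap.smulRight (1 : ℂ →L[ℂ] ℂ)
        (-((conj ξ) ^ 2)⁻¹)).restrictScalars ℝ) (conj ξ) :=
    ((hasDerivAt_inv hc).hasFDerivAt).restrictScalars ℝ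
  have h1 : HasFDerivAt (fun z : ℂ => (conj z : ℂ))
      (Complex.conjCLE : ℂ →L[ℝ] ℂ) ξ := Complex.conjCLE.hasFDerivAt
  have hτ : HasFDerivAt τ
      (-(((ContinuousLinearMap.smulRight (1 : ℂ →L[ℂ] ℂ)
        (-((conj ξ) ^ 2)⁻¹)).restrictScalars ℝ).comp
        (Complex.conjCLE : ℂ →L[ℝ] ℂ))) ξ := by
    have h3 := (h2.comp ξ h1).neg
    have : τ = fun z : ℂ => -(conj z)⁻¹ := by
      funext z; simp [hτdef, neg_div]
    rw [this]
    exact h3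
  set A := fderiv ℝ r (τ ξ) with hAdef
  set L := fderiv ℝ r ξ with hLdef
  have hA : HasFDerivAt r A (τ ξ) := (hdr (τ ξ)).hasFDerivAt
  have hcomp := hA.comp ξ hτ
  have hev : (fun z => w - r z) =ᶠ[nhds ξ] (fun z => r (τ z)) := by
    filter_upwards [isOpen_compl_singleton.mem_nhds hξ] with z hz
    have := hcw z hz
    simp only [hτdef]
    linarith
  have hcomp' := hcomp.congr_of_eventuallyEq hev
  have hB : HasFDerivAt (fun z => w - r z) ((0 : ℂ →L[ℝ] ℝ) - L) ξ :=
    (hasFDerivAt_const w ξ).sub (hdr ξ).hasFDerivAt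
  have huniq := hcomp'.unique hB
  have hval : ∀ v : ℂ, A (conj v * ((conj ξ) ^ 2)⁻¹) = - L v := by
    intro v
    have h := DFunLike.congr_fun huniq v
    simp only [ContinuousLinearMap.comp_apply, ContinuousLinearMap.coe_comp',
      Function.comp_apply, ContinuousLinearMap.neg_apply,
      ContinuousLinearMap.smulRight_apply,
      ContinuousLinearMap.one_apply, Complex.conjCLE_apply, smul_eq_mul,
      ContinuousLinearMap.sub_apply, ContinuousLinearMap.zero_apply, zero_sub,
      ContinuousLinearMap.coe_restrictScalars',
      ContinuousLinearMap.coe_neg', Pi.neg_apply, mul_neg, map_neg, neg_neg] at h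
    exact h
  have e1 : A 1 = - L (ξ ^ 2) := by
    have h := hval (ξ ^ 2)
    rw [show conj (ξ ^ 2) * ((conj ξ) ^ 2)⁻¹ = 1 by
      rw [map_pow]; exact mul_inv_cancel₀ (pow_ne_zero 2 hc)] at h
    exact h
  have e2 : A Complex.I = - L (-(Complex.I) * ξ ^ 2) := by
    have h := hval (-(Complex.I) * ξ ^ 2)
    rw [show conj (-(Complex.I) * ξ ^ 2) * ((conj ξ) ^ 2)⁻¹ = Complex.I by
      rw [map_mul, map_neg, Complex.conj_I, map_pow, neg_neg, mul_assoc,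
        mul_inv_cancel₀ (pow_ne_zero 2 hc), mul_one]] at h
    exact h
  have hL : ∀ z : ℂ, L z = z.re * L 1 + z.im * L Complex.I := by
    intro z
    have hz : z = z.re • (1 : ℂ) + z.im • Complex.I := by
      simp [Complex.real_smul]
    conv_lhs => rw [hz]
    rw [map_add, L.map_smul, L.map_smul, smul_eq_mul, smul_eq_mul]
  -- wdbarR reflection
  have hw : wdbarR r (τ ξ) = -ξ ^ 2 * conj (wdbarR r ξ) := by
    have hconjP : conj (wdbarR r ξ)
        = (1 / 2) * (((L 1 : ℝ) : ℂ) - Complex.I * ((L Complex.I : ℝ) : ℂ)) := by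
      unfold wdbarR
      rw [← hLdef, map_mul, map_add, map_mul, Complex.conj_I, Complex.conj_ofReal,
        Complex.conj_ofReal, show conj ((1 : ℂ) / 2) = 1 / 2 by norm_num [map_div₀, Complex.conj_ofNat]]
      ring
    rw [hconjP]
    unfold wdbarR
    rw [← hAdef, e1, e2, hL (ξ ^ 2), hL (-(Complex.I) * ξ ^ 2)]
    have hre : (-(Complex.I) * ξ ^ 2).re = (ξ ^ 2).im := by simp
    have him : (-(Complex.I) * ξ ^ 2).im = -((ξ ^ 2).re) := by simp
    rw [hre, him]
    set a := (ξ ^ 2).re with ha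
    set b := (ξ ^ 2).im with hb
    have hxi : (ξ ^ 2 : ℂ) = (a : ℂ) + (b : ℂ) * Complex.I := (Complex.re_add_im _).symm
    rw [hxi]
    push_cast
    linear_combination (-(b : ℂ) * ((L Complex.I : ℝ) : ℂ) * (1 / 2)) * Complex.I_sq
  -- final
  have hn : Complex.normSq (τ ξ) = 1 / Complex.normSq ξ := by
    simp [hτdef, Complex.normSq_div, Complex.normSq_conj]
  unfold Fcong
  rw [hw, hn]
  have hnz : Complex.normSq ξ ≠ 0 := (Complex.normSq_pos.mpr hξ).ne'
  have hmc : ((Complex.normSq ξ : ℝ) : ℂ) = ξ * conj ξ := (Complex.mul_conj ξ).symm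
  rw [map_mul, map_mul, Complex.conj_ofReal,
    show conj ((1 : ℂ) / 2) = 1 / 2 by norm_num [map_div₀, Complex.conj_ofNat]]
  push_cast
  rw [hmc]
  field_simp
  ring

end
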